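/- In the majority-coordination meta-game, if p > 1/2, then every Nash equilibrium Γ of the one-shot meta-game satisfies Ū^1(Γ) > Ū^2(Γ). -/

import Mathlib

open Finset

namespace MetaGame

/-- A mixed action over a finite action set: a probability vector. -/
def Mixed (α : Type) [Fintype α] : Type :=
  {f : α → ℝ // (∀ a, 0 ≤ f a) ∧ ∑ a, f a = 1}

/-- The point-mass (Dirac) mixed action on `a`. -/
noncomputable def Mixed.dirac {α : Type} [Fintype α] [DecidableEq α] (a : α) : Mixed α :=
  ⟨fun b => if b = a then 1 else 0,
    fun b => by by_cases h : b = a <;> simp [h],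
    by simp⟩

/-- A finitely supported probability distribution on `α`. -/
structure FinDist (α : Type) where
  support : Finset α
  w : α → ℝ
  nonneg : ∀ x, 0 ≤ w x
  sum_one : ∑ x ∈ support, w x = 1
  zero_of_not_mem : ∀ x, x ∉ support → w x = 0

/-- The point mass distribution on `x`. -/
noncomputable def FinDist.pure {α : Type} (x : α) : FinDist α := by
  classical
  exact
    { support := {x}
      w := fun y => if y = x then 1 else 0
      nonneg := fun y => by by_cases h : y = x <;> simp [h]
      sum_one := by simp
      zero_of_not_mem := fun y hy => by
        simp only [Finset.mem_singleton] at hy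
        simp [hy] }

variable {m k : ℕ} {A : Fin m → Type} [∀ i, Fintype (A i)] [∀ i, DecidableEq (A i)]

/-- Multilinear extension of a payoff function to profiles of mixed actions. -/
noncomputable def expPay (u : (∀ r : Fin m, A r) → ℝ) (σ : ∀ r, Mixed (A r)) : ℝ :=
  ∑ a : ∀ r : Fin m, A r, (∏ r, (σ r).1 (a r)) * u a

/-- A pure meta-action: a mixed action for each role. -/
abbrev PureMeta (A : Fin m → Type) [∀ i, Fintype (A i)] : Type := ∀ i, Mixed (A i)

/-- The role-homogeneous pure meta-action instructing pure action `a i` in each role `i`. -/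
noncomputable def diracProfile (a : ∀ i : Fin m, A i) : PureMeta A := fun i => Mixed.dirac (a i)

/-- Utility of LLM `j` under a profile of pure meta-actions. -/
noncomputable def Upure (u : ∀ i : Fin m, (∀ r : Fin m, A r) → ℝ) (p : Fin m → Fin k → ℝ)
    (j : Fin k) (M : Fin k → PureMeta A) : ℝ :=
  ∑ i, ∑ g : Fin m → Fin k,
    if g i = j then (∏ r, p r (g r)) * expPay (u i) (fun r => M (g r) r) else 0

/-- Utility of LLM `j` under a profile of (finitely supported, independent) meta-actions. -/
noncomputable def U (u : ∀ i : Fin m, (∀ r : Fin m, A r) → ℝ) (p : Fin m → Fin k → ℝ)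
    (Γ : Fin k → FinDist (PureMeta A)) (j : Fin k) : ℝ :=
  ∑ M ∈ Fintype.piFinset (fun j' => (Γ j').support),
    (∏ j', (Γ j').w (M j')) * Upure u p j M

/-- Nash equilibrium of the one-shot meta-game. -/
def Nash (u : ∀ i : Fin m, (∀ r : Fin m, A r) → ℝ) (p : Fin m → Fin k → ℝ)
    (Γ : Fin k → FinDist (PureMeta A)) : Prop :=
  ∀ (j : Fin k) (Γ' : FinDist (PureMeta A)),
    U u p (Function.update Γ j Γ') j ≤ U u p Γ j

/-- Average utility of the clients governed by LLM `j`. -/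
noncomputable def avgU (u : ∀ i : Fin m, (∀ r : Fin m, A r) → ℝ) (p : Fin m → Fin k → ℝ)
    (Γ : Fin k → FinDist (PureMeta A)) (j : Fin k) : ℝ :=
  U u p Γ j / ∑ i, p i j

/-- A meta-action is role-homogeneous if every pure meta-action in its support is a
tuple of point-mass mixed actions. -/
def RoleHomogeneous (Γ : FinDist (PureMeta A)) : Prop :=
  ∀ M ∈ Γ.support, ∃ a : ∀ i : Fin m, A i, M = diracProfile a


/-- Majority-coordination payoffs with three roles and actions `{0,1}` (encoded as `Bool`): if
all three roles choose the same action each receives `100/3`; if exactly two coincide those two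
receive `50` each and the third receives `0`. -/
noncomputable def mcu (i : Fin 3) (a : ∀ _ : Fin 3, Bool) : ℝ :=
  if a 0 = a 1 ∧ a 1 = a 2 then 100 / 3
  else if (Finset.univ.filter (fun r => a r = a i)).card = 2 then 50 else 0

/-- Client shares in the two-LLM majority-coordination meta-game: LLM `0` governs a share `pp`
of each role, LLM `1` the remaining `1 - pp`. -/
def mcp (pp : ℝ) : Fin 3 → Fin 2 → ℝ := fun _ j => if j = 0 then pp else 1 - pp

lemma sum_pi3 {α : Type} [Fintype α] (F : (Fin 3 → α) → ℝ) :
    ∑ a : Fin 3 → α, F a = ∑ x : α, ∑ y : α, ∑ z : α, F ![x, y, z] := by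
  rw [← Finset.sum_product', ← Finset.sum_product']
  apply Finset.sum_nbij' (i := fun M => ((M 0, M 1), M 2)) (j := fun p => ![p.1.1, p.1.2, p.2])
  · intro M hM; simp
  · intro p hp; simp
  · intro M hM; funext i; fin_cases i <;> simp
  · intro p hp; simp
  · intro M hM; congr 1; funext i; fin_cases i <;> rfl

lemma sum_mcu (a : Fin 3 → Bool) : mcu 0 a + mcu 1 a + mcu 2 a = 100 := by
  have ha : a = ![a 0, a 1, a 2] := by funext i; fin_cases i <;> rfl
  rcases hx : a 0 <;> rcases hy : a 1 <;> rcases hz : a 2 <;>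
    rw [ha, hx, hy, hz] <;>
    simp (config := { decide := true }) [mcu] <;> norm_num

lemma prob_sum_pi {α : Type} (t : Fin 3 → Finset α) (f : (r : Fin 3) → α → ℝ)
    (h : ∀ r, ∑ x ∈ t r, f r x = 1) :
    ∑ a ∈ Fintype.piFinset t, ∏ r, f r (a r) = 1 := by
  rw [← Finset.prod_univ_sum]
  simp [h]

lemma total100 (σ : ∀ _ : Fin 3, Mixed Bool) : ∑ i, expPay (mcu i) σ = 100 := by
  unfold expPay
  rw [Finset.sum_comm]
  have : ∀ a : Fin 3 → Bool, ∑ i : Fin 3, (∏ r, (σ r).1 (a r)) * mcu i a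
      = (∏ r, (σ r).1 (a r)) * 100 := by
    intro a
    rw [← Finset.mul_sum, Fin.sum_univ_three, sum_mcu]
  rw [Finset.sum_congr rfl (fun a _ => this a), ← Finset.sum_mul]
  have : ∑ a : Fin 3 → Bool, ∏ r, (σ r).1 (a r) = 1 := by
    rw [← Fintype.piFinset_univ]
    exact prob_sum_pi _ _ (fun r => (σ r).2.2)
  rw [this, one_mul]

lemma upure_total (pp : ℝ) (M : Fin 2 → PureMeta (fun _ : Fin 3 => Bool)) :
    Upure mcu (mcp pp) 0 M + Upure mcu (mcp pp) 1 M = 100 := by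
  unfold Upure
  rw [← Finset.sum_add_distrib]
  have h1 : ∀ i : Fin 3, (∑ g : Fin 3 → Fin 2,
        if g i = 0 then (∏ r, mcp pp r (g r)) * expPay (mcu i) (fun r => M (g r) r) else 0)
      + (∑ g : Fin 3 → Fin 2,
        if g i = 1 then (∏ r, mcp pp r (g r)) * expPay (mcu i) (fun r => M (g r) r) else 0)
      = ∑ g : Fin 3 → Fin 2, (∏ r, mcp pp r (g r)) * expPay (mcu i) (fun r => M (g r) r) := by
    intro i
    rw [← Finset.sum_add_distrib]
    refine Finset.sum_congr rfl fun g _ => ?_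
    have h2 : ∀ j : Fin 2, j = 0 ∨ j = 1 := by decide
    rcases h2 (g i) with h | h <;> rw [h] <;> simp
  rw [Finset.sum_congr rfl (fun i _ => h1 i)]
  have h3 : ∀ i : Fin 3, (∑ g : Fin 3 → Fin 2, (∏ r, mcp pp r (g r)) * expPay (mcu i) (fun r => M (g r) r))
      = ∑ g : Fin 3 → Fin 2, ∑ a : Fin 3 → Bool, (∏ r, mcp pp r (g r)) * ((∏ r, (M (g r) r).1 (a r)) * mcu i a) := by
    intro i
    refine Finset.sum_congr rfl fun g _ => ?_
    rw [expPay, Finset.mul_sum]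
  rw [Finset.sum_congr rfl (fun i _ => h3 i), Finset.sum_comm]
  have h4 : ∀ g : Fin 3 → Fin 2, (∑ i : Fin 3, ∑ a : Fin 3 → Bool, (∏ r, mcp pp r (g r)) * ((∏ r, (M (g r) r).1 (a r)) * mcu i a))
      = (∏ r, mcp pp r (g r)) * 100 := by
    intro g
    rw [Finset.sum_comm]
    have : ∀ a : Fin 3 → Bool, (∑ i : Fin 3, (∏ r, mcp pp r (g r)) * ((∏ r, (M (g r) r).1 (a r)) * mcu i a))
        = (∏ r, mcp pp r (g r)) * ((∏ r, (M (g r) r).1 (a r)) * 100) := by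
      intro a
      rw [← Finset.mul_sum, ← Finset.mul_sum, Fin.sum_univ_three, sum_mcu]
    rw [Finset.sum_congr rfl (fun a _ => this a), ← Finset.mul_sum]
    congr 1
    rw [← Finset.sum_mul]
    have : ∑ a : Fin 3 → Bool, ∏ r, (M (g r) r).1 (a r) = 1 := by
      rw [← Fintype.piFinset_univ]
      exact prob_sum_pi _ _ (fun r => (M (g r) r).2.2)
    rw [this, one_mul]
  rw [Finset.sum_congr rfl (fun g _ => h4 g), ← Finset.sum_mul]
  have : ∑ g : Fin 3 → Fin 2, ∏ r, mcp pp r (g r) = 1 := by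
    rw [← Fintype.piFinset_univ]
    refine prob_sum_pi _ _ (fun r => ?_)
    simp [mcp, Fin.sum_univ_two]
  rw [this, one_mul]

lemma prob_sum_pi2 {α : Type} (t : Fin 2 → Finset α) (f : (r : Fin 2) → α → ℝ)
    (h : ∀ r, ∑ x ∈ t r, f r x = 1) :
    ∑ a ∈ Fintype.piFinset t, ∏ r, f r (a r) = 1 := by
  rw [← Finset.prod_univ_sum]; simp [h]

lemma U_total (pp : ℝ) (Γ : Fin 2 → FinDist (PureMeta (fun _ : Fin 3 => Bool))) :
    U mcu (mcp pp) Γ 0 + U mcu (mcp pp) Γ 1 = 100 := by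
  unfold U
  rw [← Finset.sum_add_distrib]
  have : ∀ M ∈ Fintype.piFinset (fun j' => (Γ j').support),
      (∏ j', (Γ j').w (M j')) * Upure mcu (mcp pp) 0 M
        + (∏ j', (Γ j').w (M j')) * Upure mcu (mcp pp) 1 M
      = (∏ j', (Γ j').w (M j')) * 100 := by
    intro M _
    rw [← mul_add, upure_total]
  rw [Finset.sum_congr rfl this, ← Finset.sum_mul,
    prob_sum_pi2 _ _ (fun j => (Γ j).sum_one), one_mul]

lemma sum_piFinset_two {α : Type} (t : Fin 2 → Finset α) (F : (Fin 2 → α) → ℝ) :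
    ∑ M ∈ Fintype.piFinset t, F M = ∑ x ∈ t 0, ∑ y ∈ t 1, F ![x, y] := by
  rw [← Finset.sum_product']
  apply Finset.sum_nbij' (i := fun M => (M 0, M 1)) (j := fun p => ![p.1, p.2])
  · intro M hM; simp [Fintype.mem_piFinset] at hM ⊢; exact hM
  · intro p hp; simp at hp; simp [Fintype.mem_piFinset]
    exact hp
  · intro M hM; funext i; fin_cases i <;> simp
  · intro p hp; simp
  · intro M hM; congr 1; funext i; fin_cases i <;> rfl

lemma U_dev (pp : ℝ) (Γ : Fin 2 → FinDist (PureMeta (fun _ : Fin 3 => Bool))) (b : Bool) :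
    U mcu (mcp pp) (Function.update Γ 0 (FinDist.pure (diracProfile (fun _ => b)))) 0
      = ∑ σ ∈ (Γ 1).support, (Γ 1).w σ
          * Upure mcu (mcp pp) 0 ![diracProfile (fun _ => b), σ] := by
  unfold U
  rw [sum_piFinset_two]
  have h0 : Function.update Γ 0 (FinDist.pure (diracProfile (fun _ : Fin 3 => b))) 0
      = FinDist.pure (diracProfile (fun _ => b)) := by simp
  have h1 : Function.update Γ 0 (FinDist.pure (diracProfile (fun _ : Fin 3 => b))) 1
      = Γ 1 := by
    rw [Function.update_of_ne (by decide)]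
  rw [h0, h1]
  show ∑ x ∈ ({diracProfile fun _ => b} : Finset _), ∑ y ∈ (Γ 1).support, _ = _
  rw [Finset.sum_singleton]
  refine Finset.sum_congr rfl fun σ hσ => ?_
  rw [Fin.prod_univ_two]
  simp [h0, h1, FinDist.pure]

set_option maxHeartbeats 4000000 in
lemma key (pp : ℝ) (σ : PureMeta (fun _ : Fin 3 => Bool)) :
    Upure mcu (mcp pp) 0 ![diracProfile (fun _ => false), σ]
      + Upure mcu (mcp pp) 0 ![diracProfile (fun _ => true), σ]
    = 200*pp^3 + 500*pp^2*(1-pp) + 100*pp*(1-pp)^2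
      + (400/3)*pp*(1-pp)^2
        * (((σ 0).1 true + (σ 1).1 true + (σ 2).1 true)
          - ((σ 0).1 true * (σ 1).1 true + (σ 1).1 true * (σ 2).1 true
            + (σ 0).1 true * (σ 2).1 true)) := by
  have hf : ∀ r : Fin 3, (σ r).1 false = 1 - (σ r).1 true := by
    intro r
    have := (σ r).2.2
    rw [Fintype.sum_bool] at this
    linarith
  unfold Upure expPay
  rw [Fin.sum_univ_three, Fin.sum_univ_three]
  rw [sum_pi3 (α := Fin 2), sum_pi3 (α := Fin 2), sum_pi3 (α := Fin 2),
      sum_pi3 (α := Fin 2), sum_pi3 (α := Fin 2), sum_pi3 (α := Fin 2)]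
  simp only [Fin.sum_univ_two, Fintype.sum_bool, sum_pi3 (α := Bool),
    Matrix.cons_val_zero, Matrix.cons_val_one, Matrix.head_cons,
    Matrix.cons_val_two, Matrix.tail_cons, Fin.prod_univ_three,
    diracProfile, Mixed.dirac, mcp, hf]
  simp only [mcu, Finset.card_filter, Fin.sum_univ_three,
    Matrix.cons_val_zero, Matrix.cons_val_one, Matrix.head_cons,
    Matrix.cons_val_two, Matrix.tail_cons]
  simp (config := { decide := true })
  norm_num
  ring

lemma key_ge (pp : ℝ) (hp0 : 0 ≤ pp) (hp1 : pp ≤ 1) (σ : PureMeta (fun _ : Fin 3 => Bool)) :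
    200*pp^3 + 500*pp^2*(1-pp) + 100*pp*(1-pp)^2
      ≤ Upure mcu (mcp pp) 0 ![diracProfile (fun _ => false), σ]
        + Upure mcu (mcp pp) 0 ![diracProfile (fun _ => true), σ] := by
  rw [key]
  have hq0 : ∀ r : Fin 3, 0 ≤ (σ r).1 true := fun r => (σ r).2.1 true
  have hq1 : ∀ r : Fin 3, (σ r).1 true ≤ 1 := by
    intro r
    have h := (σ r).2.2
    rw [Fintype.sum_bool] at h
    have := (σ r).2.1 false
    linarith
  have h0 := hq0 0; have h1 := hq0 1; have h2 := hq0 2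
  have k0 := hq1 0; have k1 := hq1 1; have k2 := hq1 2
  nlinarith [mul_nonneg (mul_nonneg (mul_nonneg hp0 (sq_nonneg (1-pp))) (hq0 0)) (sub_nonneg.2 (hq1 1)),
    mul_nonneg (mul_nonneg (mul_nonneg hp0 (sq_nonneg (1-pp))) (hq0 1)) (sub_nonneg.2 (hq1 2)),
    mul_nonneg (mul_nonneg (mul_nonneg hp0 (sq_nonneg (1-pp))) (hq0 2)) (sub_nonneg.2 (hq1 0))]

/-- In the majority-coordination meta-game with `p > 1/2`, in every Nash equilibrium the large
LLM obtains a strictly higher average utility than the small LLM. -/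
theorem mc_large_llm_better_off
    (pp : ℝ) (hpp : 1 / 2 < pp) (hpp1 : pp < 1)
    (Γ : Fin 2 → FinDist (PureMeta (fun _ : Fin 3 => Bool)))
    (hNash : Nash mcu (mcp pp) Γ) :
    avgU mcu (mcp pp) Γ 1 < avgU mcu (mcp pp) Γ 0 := by
  have hp0 : (0:ℝ) ≤ pp := by linarith
  have hp1 : pp ≤ 1 := le_of_lt hpp1
  have hdev : ∀ b : Bool,
      (∑ σ ∈ (Γ 1).support, (Γ 1).w σ * Upure mcu (mcp pp) 0 ![diracProfile (fun _ => b), σ])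
        ≤ U mcu (mcp pp) Γ 0 := by
    intro b
    rw [← U_dev pp Γ b]
    exact hNash 0 (FinDist.pure (diracProfile (fun _ => b)))
  have hsum : 200*pp^3 + 500*pp^2*(1-pp) + 100*pp*(1-pp)^2 ≤ 2 * U mcu (mcp pp) Γ 0 := by
    have h1 := hdev false
    have h2 := hdev true
    have h3 : 200*pp^3 + 500*pp^2*(1-pp) + 100*pp*(1-pp)^2
        ≤ (∑ σ ∈ (Γ 1).support, (Γ 1).w σ * Upure mcu (mcp pp) 0 ![diracProfile (fun _ => false), σ])
          + ∑ σ ∈ (Γ 1).support, (Γ 1).w σ * Upure mcu (mcp pp) 0 ![diracProfile (fun _ => true), σ] := by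
      rw [← Finset.sum_add_distrib]
      calc 200*pp^3 + 500*pp^2*(1-pp) + 100*pp*(1-pp)^2
          = ∑ σ ∈ (Γ 1).support, (Γ 1).w σ * (200*pp^3 + 500*pp^2*(1-pp) + 100*pp*(1-pp)^2) := by
            rw [← Finset.sum_mul, (Γ 1).sum_one, one_mul]
        _ ≤ _ := by
            refine Finset.sum_le_sum fun σ _ => ?_
            rw [← mul_add]
            exact mul_le_mul_of_nonneg_left (key_ge pp hp0 hp1 σ) ((Γ 1).nonneg σ)
    linarith
  have hU0 : 100 * pp < U mcu (mcp pp) Γ 0 := by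
    nlinarith [mul_pos (mul_pos (show (0:ℝ) < pp by linarith)
      (show (0:ℝ) < 2*pp-1 by linarith)) (show (0:ℝ) < 1-pp by linarith)]
  have htot := U_total pp Γ
  unfold avgU
  have hd0 : ∑ i : Fin 3, mcp pp i 0 = 3 * pp := by
    simp [mcp, Fin.sum_univ_three]
  have hd1 : ∑ i : Fin 3, mcp pp i 1 = 3 * (1 - pp) := by
    simp [mcp, Fin.sum_univ_three]; ring
  rw [hd0, hd1]
  rw [div_lt_div_iff₀ (by linarith) (by linarith)]
  nlinarith

end MetaGame
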